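/- Let μ > 0, let α ∈ (0,1), and set θ = (1-α)/α. Let ỹ ∈ ℤ. Then the pmf of the privatized observation ỹ = y + τ, where y ~ Pois(μ) and τ ~ 2Geo(α) are independent, equals the double exponential mixture of a shifted Skellam pmf: Σ_{y=0}^∞ Pois(y; μ) · 2Geo(ỹ - y; α) = ∫_0^∞ ∫_0^∞ θ·exp(-θ·λ₊) · θ·exp(-θ·λ₋) · Skel(ỹ; μ + λ₊, λ₋) dλ₊ dλ₋. That is, a Poisson(μ) count privatized by the geometric mechanism with parameter α is marginally a Skellam random variable Skel(μ + λ₊, λ₋) with λ₊, λ₋ independently exponentially distributed with mean α/(1-α). -/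

import Mathlib

open MeasureTheory

/-- The Poisson pmf with rate `λ`: `Pois(k; λ) = exp(-λ) · λ^k / k!`. -/
noncomputable def poisPMF (lam : ℝ) (k : ℕ) : ℝ :=
  Real.exp (-lam) * lam ^ k / (Nat.factorial k)

/-- The Skellam pmf with rates `λ₁, λ₂`, the distribution of the difference of two
independent Poisson random variables:
`Skel(τ; λ₁, λ₂) = Σ_{m=0}^∞ Pois(m + τ⁺; λ₁) · Pois(m + τ⁻; λ₂)`. -/
noncomputable def skelPMF (lam₁ lam₂ : ℝ) (τ : ℤ) : ℝ :=
  ∑' m : ℕ, poisPMF lam₁ (m + τ.toNat) * poisPMF lam₂ (m + (-τ).toNat)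

/-- The two-sided geometric pmf with parameter `α`: `2Geo(τ; α) = ((1-α)/(1+α)) · α^|τ|`. -/
noncomputable def twoGeoPMF (α : ℝ) (τ : ℤ) : ℝ := ((1 - α) / (1 + α)) * α ^ τ.natAbs

open Real Set

section Aux

lemma poisPMF_nonneg {lam : ℝ} (h : 0 ≤ lam) (k : ℕ) : 0 ≤ poisPMF lam k := by
  unfold poisPMF; positivity

lemma continuous_poisPMF (k : ℕ) : Continuous (fun t : ℝ => poisPMF t k) := by
  unfold poisPMF
  fun_prop

lemma summable_pois_shift (c : ℝ) (b : ℕ) : Summable (fun m : ℕ => poisPMF c (m+b)) := by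
  have h := (Real.summable_pow_div_factorial c).comp_injective
    (add_left_injective b)
  refine (h.mul_left (Real.exp (-c))).congr (fun m => ?_)
  simp only [Function.comp]
  rw [poisPMF, mul_div_assoc]

lemma summable_pois (c : ℝ) : Summable (fun m : ℕ => poisPMF c m) := by
  refine (summable_pois_shift c 0).congr (fun m => by rw [Nat.add_zero])

lemma geom_sum_ite {α : ℝ} (hα0 : 0 < α) (hα1 : α < 1) (a b j : ℕ) :
    ∑' m : ℕ, (if j ≤ m + a then (1-α)^2 * α^(2*m + a + b - j) else 0)
      = (1-α)/(1+α) * α^((a - j) + (j - a) + b) := by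
  set e := (a - j) + (j - a) + b with he
  set m₀ := j - a with hm₀
  set f : ℕ → ℝ := fun m => if j ≤ m + a then (1-α)^2 * α^(2*m + a + b - j) else 0 with hf
  have key : ∀ k : ℕ, f (m₀ + k) = ((1-α)^2 * α^e) * (α^2)^k := by
    intro k
    have hc : j ≤ m₀ + k + a := by omega
    rw [hf]
    simp only []
    rw [if_pos hc, show 2*(m₀+k) + a + b - j = e + 2*k by omega, pow_add, pow_mul]
    ring
  have hsupp : Function.support f ⊆ Set.range (fun k => m₀ + k) := by
    intro m hm
    by_contra hmem
    have hlt : m < m₀ := by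
      by_contra h
      exact hmem ⟨m - m₀, show m₀ + (m - m₀) = m by omega⟩
    have : f m = 0 := by rw [hf]; simp only []; rw [if_neg (by omega)]
    exact hm this
  have hinj : Function.Injective (fun k : ℕ => m₀ + k) := add_right_injective m₀
  rw [← Function.Injective.tsum_eq hinj hsupp]
  simp_rw [key]
  rw [tsum_mul_left, tsum_geometric_of_lt_one (by positivity) (by nlinarith)]
  have h1 : (1 : ℝ) - α^2 ≠ 0 := by nlinarith
  have h2 : (1 : ℝ) + α ≠ 0 := by linarith
  field_simp
  ring

lemma integrableOn_pow_mul_exp_neg (k : ℕ) {b : ℝ} (hb : 0 < b) :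
    IntegrableOn (fun t : ℝ => t ^ k * Real.exp (-b * t)) (Ioi 0) := by
  have h := integrableOn_rpow_mul_exp_neg_mul_rpow (p := 1) (s := k) (b := b)
    (lt_of_lt_of_le neg_one_lt_zero (Nat.cast_nonneg k)) one_pos hb
  refine h.congr_fun (fun t ht => ?_) measurableSet_Ioi
  rw [mem_Ioi] at ht
  beta_reduce
  rw [Real.rpow_one, Real.rpow_natCast]

lemma integral_pow_mul_exp_neg (k : ℕ) {b : ℝ} (hb : 0 < b) :
    ∫ t in Ioi (0:ℝ), t ^ k * Real.exp (-b * t) = (Nat.factorial k) / b ^ (k+1) := by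
  have h := Real.integral_rpow_mul_exp_neg_mul_Ioi (a := (k:ℝ)+1) (r := b)
    (by positivity) hb
  rw [show ((k:ℝ)+1) - 1 = (k:ℝ) by ring, Real.Gamma_nat_eq_factorial,
    show ((k:ℝ)+1) = ((k+1:ℕ):ℝ) by push_cast; ring, Real.rpow_natCast] at h
  rw [show (∫ t in Ioi (0:ℝ), t ^ k * Real.exp (-b * t))
      = ∫ t in Ioi (0:ℝ), t ^ (k:ℝ) * Real.exp (-(b * t)) from
    setIntegral_congr_fun measurableSet_Ioi (fun t ht => by
      rw [mem_Ioi] at ht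
      rw [Real.rpow_natCast, neg_mul]), h]
  field_simp
  rw [← mul_pow, one_div, inv_mul_cancel₀ hb.ne', one_pow]

variable {α : ℝ}

lemma hfunA (n : ℕ) (μ : ℝ) (t : ℝ) :
    (1-α)/α * Real.exp (-((1-α)/α) * t) * poisPMF (μ+t) n
      = ∑ j ∈ Finset.range (n+1),
          ((1-α)/α * Real.exp (-μ) * μ^j * (n.choose j) / n.factorial)
            * (t^(n-j) * Real.exp (-(1 + (1-α)/α) * t)) := by
  have he : Real.exp (-(μ+t)) = Real.exp (-μ) * Real.exp (-t) := by
    rw [← Real.exp_add]; ring_nf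
  have he2 : ∀ t : ℝ, Real.exp (-(1 + (1-α)/α) * t)
      = Real.exp (-t) * Real.exp (-((1-α)/α) * t) := by
    intro t; rw [← Real.exp_add]; ring_nf
  unfold poisPMF
  rw [add_pow]
  simp only [Finset.sum_div, Finset.mul_sum]
  refine Finset.sum_congr rfl (fun j hj => ?_)
  rw [he, he2]
  ring

lemma intA_integrable (n : ℕ) (μ : ℝ) (hα0 : 0 < α) (hα1 : α < 1) :
    IntegrableOn (fun t => (1-α)/α * Real.exp (-((1-α)/α) * t) * poisPMF (μ+t) n)
      (Ioi 0) := by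
  have hb : 0 < 1 + (1-α)/α := by
    have := div_pos (by linarith : (0:ℝ) < 1-α) hα0; linarith
  have : IntegrableOn (fun t => ∑ j ∈ Finset.range (n+1),
      ((1-α)/α * Real.exp (-μ) * μ^j * (n.choose j) / n.factorial)
        * (t^(n-j) * Real.exp (-(1 + (1-α)/α) * t))) (Ioi 0) :=
    integrable_finset_sum _ (fun j _ => ((integrableOn_pow_mul_exp_neg (n-j) hb).const_mul _))
  exact this.congr_fun (fun t _ => (hfunA n μ t).symm) measurableSet_Ioi

lemma intA (n : ℕ) (μ : ℝ) (hα0 : 0 < α) (hα1 : α < 1) :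
    ∫ t in Ioi (0:ℝ), (1-α)/α * Real.exp (-((1-α)/α) * t) * poisPMF (μ+t) n
      = ∑ j ∈ Finset.range (n+1), poisPMF μ j * ((1-α) * α^(n-j)) := by
  have hb : 0 < 1 + (1-α)/α := by
    have := div_pos (by linarith : (0:ℝ) < 1-α) hα0; linarith
  rw [setIntegral_congr_fun measurableSet_Ioi (fun t _ => hfunA n μ t)]
  rw [integral_finset_sum _ (fun j _ => ((integrableOn_pow_mul_exp_neg (n-j) hb).const_mul _))]
  refine Finset.sum_congr rfl (fun j hj => ?_)
  rw [integral_const_mul, integral_pow_mul_exp_neg _ hb]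
  have hj' : j ≤ n := Finset.mem_range_succ_iff.mp hj
  have hc : ((n.choose j : ℝ)) * j.factorial * (n-j).factorial = n.factorial := by
    exact_mod_cast congrArg (Nat.cast : ℕ → ℝ) (Nat.choose_mul_factorial_mul_factorial hj')
  have h1θ : 1 + (1-α)/α = 1/α := by field_simp; ring
  rw [h1θ, poisPMF]
  have hα : α ≠ 0 := ne_of_gt hα0
  have hf1 : (n.factorial : ℝ) ≠ 0 := Nat.cast_ne_zero.mpr n.factorial_ne_zero
  have hf2 : (j.factorial : ℝ) ≠ 0 := Nat.cast_ne_zero.mpr j.factorial_ne_zero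
  rw [one_div, inv_pow, div_inv_eq_mul]
  field_simp
  linear_combination (α - α^2) * α^(n-j) * μ^j * hc

lemma intA0_integrable (n : ℕ) (hα0 : 0 < α) (hα1 : α < 1) :
    IntegrableOn (fun t => (1-α)/α * Real.exp (-((1-α)/α) * t) * poisPMF t n)
      (Ioi 0) := by
  have h := intA_integrable (α := α) n 0 hα0 hα1
  simpa using h

lemma intA0 (n : ℕ) (hα0 : 0 < α) (hα1 : α < 1) :
    ∫ t in Ioi (0:ℝ), (1-α)/α * Real.exp (-((1-α)/α) * t) * poisPMF t n
      = (1-α) * α^n := by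
  have h := intA (α := α) n 0 hα0 hα1
  simp only [zero_add] at h
  rw [h]
  rw [Finset.sum_eq_single_of_mem 0 (Finset.mem_range.2 (Nat.succ_pos n))]
  · simp [poisPMF]
  · intro j _ hj
    have : poisPMF 0 j = 0 := by
      rw [poisPMF, zero_pow hj]; simp
    rw [this, zero_mul]

lemma lintegral_nnnorm_eq_ofReal {f : ℝ → ℝ} (hfi : IntegrableOn f (Ioi 0))
    (hf : ∀ t ∈ Ioi (0:ℝ), 0 ≤ f t) :
    ∫⁻ t in Ioi (0:ℝ), ‖f t‖₊ = ENNReal.ofReal (∫ t in Ioi (0:ℝ), f t) := by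
  have hae : 0 ≤ᵐ[volume.restrict (Ioi (0:ℝ))] f :=
    (ae_restrict_iff' measurableSet_Ioi).2 (Filter.Eventually.of_forall hf)
  rw [ofReal_integral_eq_lintegral_ofReal hfi hae]
  refine lintegral_congr_ae ?_
  filter_upwards [hae] with t ht
  rw [← enorm_eq_nnnorm, Real.enorm_eq_ofReal ht]

lemma aux_le_one {α : ℝ} (hα0 : 0 < α) (hα1 : α < 1) (k : ℕ) : (1-α) * α^k ≤ 1 := by
  have h1 : α ^ k ≤ 1 := pow_le_one₀ hα0.le hα1.le
  nlinarith

/-- Inner integral evaluation. -/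
lemma inner_eval (hα0 : 0 < α) (hα1 : α < 1) (ν : ℝ) (hν : 0 ≤ ν) (a b : ℕ) :
    ∫ t in Ioi (0:ℝ), (1-α)/α * Real.exp (-((1-α)/α) * t)
        * (∑' m : ℕ, poisPMF ν (m+a) * poisPMF t (m+b))
      = ∑' m : ℕ, poisPMF ν (m+a) * ((1-α) * α^(m+b)) := by
  set f : ℕ → ℝ → ℝ := fun m t =>
    (1-α)/α * Real.exp (-((1-α)/α) * t) * (poisPMF ν (m+a) * poisPMF t (m+b)) with hfdef
  have hcong : ∀ t : ℝ, (1-α)/α * Real.exp (-((1-α)/α) * t)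
      * (∑' m : ℕ, poisPMF ν (m+a) * poisPMF t (m+b)) = ∑' m : ℕ, f m t := by
    intro t; rw [tsum_mul_left]
  have hint : ∀ m : ℕ, IntegrableOn (fun t => f m t) (Ioi 0) := by
    intro m
    have h : IntegrableOn (fun t => poisPMF ν (m+a)
        * ((1-α)/α * Real.exp (-((1-α)/α) * t) * poisPMF t (m+b))) (Ioi 0) :=
      (intA0_integrable (α := α) (m+b) hα0 hα1).const_mul (poisPMF ν (m+a))
    refine h.congr_fun (fun t _ => ?_) measurableSet_Ioi
    rw [hfdef]; ring
  have hval : ∀ m : ℕ, ∫ t in Ioi (0:ℝ), f m t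
      = poisPMF ν (m+a) * ((1-α) * α^(m+b)) := by
    intro m
    rw [show (fun t => f m t) = fun t => poisPMF ν (m+a)
        * ((1-α)/α * Real.exp (-((1-α)/α) * t) * poisPMF t (m+b)) from
      funext (fun t => by rw [hfdef]; ring)]
    rw [integral_const_mul, intA0 (m+b) hα0 hα1]
  have hnn : ∀ m : ℕ, ∀ t ∈ Ioi (0:ℝ), 0 ≤ f m t := by
    intro m t ht
    rw [mem_Ioi] at ht
    have h1 : (0:ℝ) < (1-α)/α := div_pos (by linarith) hα0
    have h2 := poisPMF_nonneg hν (m+a)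
    have h3 := poisPMF_nonneg ht.le (m+b)
    rw [hfdef]
    exact mul_nonneg (mul_nonneg h1.le (Real.exp_pos _).le) (mul_nonneg h2 h3)
  have hsum : Summable (fun m : ℕ => poisPMF ν (m+a) * ((1-α) * α^(m+b))) := by
    refine Summable.of_nonneg_of_le (fun m => ?_) (fun m => ?_) (summable_pois_shift ν a)
    · exact mul_nonneg (poisPMF_nonneg hν _)
        (mul_nonneg (by linarith) (pow_nonneg hα0.le _))
    · calc poisPMF ν (m+a) * ((1-α) * α^(m+b))
          ≤ poisPMF ν (m+a) * 1 :=
            mul_le_mul_of_nonneg_left (aux_le_one hα0 hα1 (m+b)) (poisPMF_nonneg hν (m+a))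
        _ = poisPMF ν (m+a) := mul_one _
  rw [show (fun t => (1-α)/α * Real.exp (-((1-α)/α) * t)
      * (∑' m : ℕ, poisPMF ν (m+a) * poisPMF t (m+b))) = fun t => ∑' m, f m t from
    funext hcong]
  rw [integral_tsum (fun m => (hint m).aestronglyMeasurable) ?_]
  · exact tsum_congr hval
  · have heq : ∀ m : ℕ, ∫⁻ t in Ioi (0:ℝ), ‖f m t‖₊
        = ENNReal.ofReal (poisPMF ν (m+a) * ((1-α) * α^(m+b))) := fun m => by
      rw [lintegral_nnnorm_eq_ofReal (hint m) (hnn m), hval m]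
    simp only [enorm_eq_nnnorm]
    rw [tsum_congr heq, ← ENNReal.ofReal_tsum_of_nonneg (fun m =>
      mul_nonneg (poisPMF_nonneg hν _)
        (mul_nonneg (by linarith) (pow_nonneg hα0.le _))) hsum]
    exact ENNReal.ofReal_ne_top

lemma summable_TC (hα0 : 0 < α) (hα1 : α < 1) (μ : ℝ) (hμ : 0 ≤ μ) (a b : ℕ) :
    Summable (fun m : ℕ => ((1-α) * α^(m+b)) *
      ∑ j ∈ Finset.range (m+a+1), poisPMF μ j * ((1-α) * α^(m+a-j))) := by
  set B := ∑' j : ℕ, poisPMF μ j with hB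
  have hBnn : 0 ≤ B := tsum_nonneg (fun j => poisPMF_nonneg hμ j)
  have hTnn : ∀ m : ℕ, 0 ≤ ∑ j ∈ Finset.range (m+a+1), poisPMF μ j * ((1-α) * α^(m+a-j)) :=
    fun m => Finset.sum_nonneg (fun j _ => mul_nonneg (poisPMF_nonneg hμ j)
      (mul_nonneg (by linarith) (pow_nonneg hα0.le _)))
  have hTle : ∀ m : ℕ, (∑ j ∈ Finset.range (m+a+1), poisPMF μ j * ((1-α) * α^(m+a-j))) ≤ B := by
    intro m
    calc (∑ j ∈ Finset.range (m+a+1), poisPMF μ j * ((1-α) * α^(m+a-j)))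
        ≤ ∑ j ∈ Finset.range (m+a+1), poisPMF μ j :=
          Finset.sum_le_sum (fun j _ => by
            calc poisPMF μ j * ((1-α) * α^(m+a-j)) ≤ poisPMF μ j * 1 :=
                mul_le_mul_of_nonneg_left (aux_le_one hα0 hα1 _) (poisPMF_nonneg hμ j)
              _ = poisPMF μ j := mul_one _)
      _ ≤ B := Summable.sum_le_tsum _ (fun j _ => poisPMF_nonneg hμ j) (summable_pois μ)
  refine Summable.of_nonneg_of_le
    (fun m => mul_nonneg (mul_nonneg (by linarith) (pow_nonneg hα0.le _)) (hTnn m))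
    (fun m => ?_)
    ((summable_geometric_of_lt_one hα0.le hα1).mul_left (B * ((1-α) * α^b)))
  calc ((1-α) * α^(m+b)) * ∑ j ∈ Finset.range (m+a+1), poisPMF μ j * ((1-α) * α^(m+a-j))
      ≤ ((1-α) * α^(m+b)) * B := mul_le_mul_of_nonneg_left (hTle m)
        (mul_nonneg (by linarith) (pow_nonneg hα0.le _))
    _ = B * ((1-α) * α^b) * α^m := by rw [pow_add]; ring

/-- Outer integral evaluation. -/
lemma outer_eval (hα0 : 0 < α) (hα1 : α < 1) (μ : ℝ) (hμ : 0 ≤ μ) (a b : ℕ) :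
    ∫ t in Ioi (0:ℝ), (1-α)/α * Real.exp (-((1-α)/α) * t)
        * (∑' m : ℕ, poisPMF (μ+t) (m+a) * ((1-α) * α^(m+b)))
      = ∑' m : ℕ, ((1-α) * α^(m+b)) *
          ∑ j ∈ Finset.range (m+a+1), poisPMF μ j * ((1-α) * α^(m+a-j)) := by
  set f : ℕ → ℝ → ℝ := fun m t =>
    (1-α)/α * Real.exp (-((1-α)/α) * t) * (poisPMF (μ+t) (m+a) * ((1-α) * α^(m+b))) with hfdef
  have hcong : ∀ t : ℝ, (1-α)/α * Real.exp (-((1-α)/α) * t)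
      * (∑' m : ℕ, poisPMF (μ+t) (m+a) * ((1-α) * α^(m+b))) = ∑' m : ℕ, f m t := by
    intro t; rw [tsum_mul_left]
  have hint : ∀ m : ℕ, IntegrableOn (fun t => f m t) (Ioi 0) := by
    intro m
    have h : IntegrableOn (fun t => ((1-α) * α^(m+b))
        * ((1-α)/α * Real.exp (-((1-α)/α) * t) * poisPMF (μ+t) (m+a))) (Ioi 0) :=
      (intA_integrable (α := α) (m+a) μ hα0 hα1).const_mul _
    refine h.congr_fun (fun t _ => ?_) measurableSet_Ioi
    rw [hfdef]; ring
  have hval : ∀ m : ℕ, ∫ t in Ioi (0:ℝ), f m t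
      = ((1-α) * α^(m+b)) *
          ∑ j ∈ Finset.range (m+a+1), poisPMF μ j * ((1-α) * α^(m+a-j)) := by
    intro m
    rw [show (fun t => f m t) = fun t => ((1-α) * α^(m+b))
        * ((1-α)/α * Real.exp (-((1-α)/α) * t) * poisPMF (μ+t) (m+a)) from
      funext (fun t => by rw [hfdef]; ring)]
    rw [integral_const_mul, intA (m+a) μ hα0 hα1]
  have hnn : ∀ m : ℕ, ∀ t ∈ Ioi (0:ℝ), 0 ≤ f m t := by
    intro m t ht
    rw [mem_Ioi] at ht
    have h1 : (0:ℝ) < (1-α)/α := div_pos (by linarith) hα0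
    have h2 : (0:ℝ) ≤ μ + t := by linarith
    have h3 := poisPMF_nonneg h2 (m+a)
    have h4 : (0:ℝ) ≤ (1-α) * α^(m+b) := mul_nonneg (by linarith) (pow_nonneg hα0.le _)
    rw [hfdef]
    exact mul_nonneg (mul_nonneg h1.le (Real.exp_pos _).le) (mul_nonneg h3 h4)
  have hsum := summable_TC hα0 hα1 μ hμ a b
  rw [show (fun t => (1-α)/α * Real.exp (-((1-α)/α) * t)
      * (∑' m : ℕ, poisPMF (μ+t) (m+a) * ((1-α) * α^(m+b)))) = fun t => ∑' m, f m t from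
    funext hcong]
  rw [integral_tsum (fun m => (hint m).aestronglyMeasurable) ?_]
  · exact tsum_congr hval
  · have heq : ∀ m : ℕ, ∫⁻ t in Ioi (0:ℝ), ‖f m t‖₊
        = ENNReal.ofReal (((1-α) * α^(m+b)) *
          ∑ j ∈ Finset.range (m+a+1), poisPMF μ j * ((1-α) * α^(m+a-j))) := fun m => by
      rw [lintegral_nnnorm_eq_ofReal (hint m) (hnn m), hval m]
    simp only [enorm_eq_nnnorm]
    rw [tsum_congr heq, ← ENNReal.ofReal_tsum_of_nonneg (fun m =>
      mul_nonneg (mul_nonneg (by linarith) (pow_nonneg hα0.le _))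
        (Finset.sum_nonneg (fun j _ => mul_nonneg (poisPMF_nonneg hμ j)
          (mul_nonneg (by linarith) (pow_nonneg hα0.le _))))) hsum]
    exact ENNReal.ofReal_ne_top

/-- Exchange of summation and geometric evaluation. -/
lemma swap_eval (hα0 : 0 < α) (hα1 : α < 1) (μ : ℝ) (hμ : 0 ≤ μ) (a b : ℕ) :
    ∑' m : ℕ, ((1-α) * α^(m+b)) *
        ∑ j ∈ Finset.range (m+a+1), poisPMF μ j * ((1-α) * α^(m+a-j))
      = ∑' j : ℕ, poisPMF μ j * ((1-α)/(1+α) * α^((a-j)+(j-a)+b)) := by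
  set F : ℕ → ℕ → ℝ := fun m j =>
    if j ≤ m + a then poisPMF μ j * ((1-α)^2 * α^(2*m+a+b-j)) else 0 with hF
  have hFnn : ∀ m j, 0 ≤ F m j := by
    intro m j
    rw [hF]; dsimp only
    split
    · exact mul_nonneg (poisPMF_nonneg hμ j)
        (mul_nonneg (by positivity) (pow_nonneg hα0.le _))
    · exact le_refl 0
  have hrow : ∀ m : ℕ, ((1-α) * α^(m+b)) *
      ∑ j ∈ Finset.range (m+a+1), poisPMF μ j * ((1-α) * α^(m+a-j)) = ∑' j, F m j := by
    intro m
    rw [tsum_eq_sum (s := Finset.range (m+a+1)) (fun j hj => by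
      rw [hF]; dsimp only
      rw [if_neg (by rw [Finset.mem_range] at hj; omega)])]
    rw [Finset.mul_sum]
    refine Finset.sum_congr rfl (fun j hj => ?_)
    rw [Finset.mem_range] at hj
    have hj' : j ≤ m + a := by omega
    rw [hF]; dsimp only
    rw [if_pos hj', show 2*m+a+b-j = (m+b) + (m+a-j) by omega, pow_add]
    ring
  have huncurry : Summable (Function.uncurry F) := by
    refine (summable_prod_of_nonneg (fun p => hFnn p.1 p.2)).mpr ⟨fun m => ?_, ?_⟩
    · refine summable_of_ne_finset_zero (s := Finset.range (m+a+1)) (fun j hj => ?_)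
      rw [hF]; dsimp only
      rw [if_neg (by rw [Finset.mem_range] at hj; omega)]
    · exact (summable_TC hα0 hα1 μ hμ a b).congr (fun m => hrow m)
  calc ∑' m : ℕ, ((1-α) * α^(m+b)) *
        ∑ j ∈ Finset.range (m+a+1), poisPMF μ j * ((1-α) * α^(m+a-j))
      = ∑' m, ∑' j, F m j := tsum_congr hrow
    _ = ∑' j, ∑' m, F m j := (Summable.tsum_comm huncurry).symm
    _ = ∑' j : ℕ, poisPMF μ j * ((1-α)/(1+α) * α^((a-j)+(j-a)+b)) := by
        refine tsum_congr (fun j => ?_)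
        have hsplit : ∀ m : ℕ, F m j = poisPMF μ j *
            (if j ≤ m + a then (1-α)^2 * α^(2*m+a+b-j) else 0) := by
          intro m
          rw [hF]; dsimp only
          rw [mul_ite, mul_zero]
        rw [tsum_congr hsplit, tsum_mul_left, geom_sum_ite hα0 hα1]

end Aux

/-- A `Pois(μ)` count privatized by the geometric mechanism with parameter `α` is
marginally a Skellam random variable `Skel(μ + λ₊, λ₋)` with `λ₊, λ₋` independently
exponentially distributed with rate `θ = (1-α)/α` (mean `α/(1-α)`). -/
theorem privatized_poisson_is_exponentially_randomized_skellam
    (μ : ℝ) (hμ : 0 < μ) (α : ℝ) (hα0 : 0 < α) (hα1 : α < 1)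
    (θ : ℝ) (hθ : θ = (1 - α) / α) (ytilde : ℤ) :
    ∑' y : ℕ, poisPMF μ y * twoGeoPMF α (ytilde - (y : ℤ))
      = ∫ lamp in Set.Ioi (0 : ℝ), ∫ lamm in Set.Ioi (0 : ℝ),
          θ * Real.exp (-θ * lamp) * (θ * Real.exp (-θ * lamm)) *
            skelPMF (μ + lamp) lamm ytilde := by
  subst hθ
  have hin : ∀ lamp ∈ Ioi (0:ℝ),
      (∫ lamm in Ioi (0:ℝ), (1-α)/α * Real.exp (-((1-α)/α) * lamp)
          * ((1-α)/α * Real.exp (-((1-α)/α) * lamm)) * skelPMF (μ + lamp) lamm ytilde)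
        = (1-α)/α * Real.exp (-((1-α)/α) * lamp)
          * (∑' m : ℕ, poisPMF (μ + lamp) (m + ytilde.toNat)
              * ((1-α) * α^(m + (-ytilde).toNat))) := by
    intro lamp hlamp
    rw [mem_Ioi] at hlamp
    rw [show (fun lamm => (1-α)/α * Real.exp (-((1-α)/α) * lamp)
        * ((1-α)/α * Real.exp (-((1-α)/α) * lamm)) * skelPMF (μ + lamp) lamm ytilde)
        = fun lamm => ((1-α)/α * Real.exp (-((1-α)/α) * lamp))
          * ((1-α)/α * Real.exp (-((1-α)/α) * lamm) * skelPMF (μ + lamp) lamm ytilde) from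
      funext (fun lamm => by ring)]
    rw [integral_const_mul]
    congr 1
    have h := inner_eval hα0 hα1 (μ + lamp) (by linarith) ytilde.toNat (-ytilde).toNat
    simp only [skelPMF]
    exact h
  rw [setIntegral_congr_fun measurableSet_Ioi hin,
    outer_eval hα0 hα1 μ hμ.le ytilde.toNat (-ytilde).toNat,
    swap_eval hα0 hα1 μ hμ.le ytilde.toNat (-ytilde).toNat]
  refine tsum_congr (fun y => ?_)
  rw [twoGeoPMF, show (ytilde - (y:ℤ)).natAbs
    = (ytilde.toNat - y) + (y - ytilde.toNat) + (-ytilde).toNat by omega]
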